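/- For all integers r ≥ 1 and s ≥ 1, setting μ = 15 + r + s, the following inequality of rational numbers holds: (7/8 − 3/2)² + (5/4 − 3/2)² + (11/8 − 3/2)² + (3/2 − 3/2)² + (13/8 − 3/2)² + (7/4 − 3/2)² + (17/8 − 3/2)² + ∑_{u=1}^{r+4} ((2u + 2r + 7)/(2(r+4)) − 3/2)² + ∑_{v=1}^{s+4} ((2v + 2s + 7)/(2(s+4)) − 3/2)² ≤ (μ/12)·(17/8 − 7/8). -/
import Mathlib

lemma sum_id_q (m : ℕ) : ∑ u ∈ Finset.Icc 1 m, (u : ℚ) = m * (m + 1) / 2 := by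
  induction m with
  | zero => simp
  | succ n ih =>
      rw [Finset.sum_Icc_succ_top (by omega), ih]
      push_cast
      ring

lemma sum_sq_q (m : ℕ) : ∑ u ∈ Finset.Icc 1 m, (u : ℚ) ^ 2 = m * (m + 1) * (2 * m + 1) / 6 := by
  induction m with
  | zero => simp
  | succ n ih =>
      rw [Finset.sum_Icc_succ_top (by omega), ih]
      push_cast
      ring

lemma key_sum (r : ℕ) :
    ∑ u ∈ Finset.Icc 1 (r + 4), ((2 * (u : ℚ) + 2 * (r : ℚ) + 7) / (2 * ((r : ℚ) + 4)) - 3/2) ^ 2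
      = (((r : ℚ) + 4) ^ 2 - 1) / (12 * ((r : ℚ) + 4)) := by
  have hne : 2 * ((r : ℚ) + 4) ≠ 0 := by positivity
  have h : ∀ u ∈ Finset.Icc 1 (r + 4),
      ((2 * (u : ℚ) + 2 * (r : ℚ) + 7) / (2 * ((r : ℚ) + 4)) - 3/2) ^ 2
        = (4 * (u : ℚ) ^ 2 - (4 * (r : ℚ) + 20) * u + ((r : ℚ) + 5) ^ 2)
            / (2 * ((r : ℚ) + 4)) ^ 2 := by
    intro u _
    field_simp
    ring
  rw [Finset.sum_congr rfl h, ← Finset.sum_div]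
  have e1 : ∑ u ∈ Finset.Icc 1 (r + 4),
      (4 * (u : ℚ) ^ 2 - (4 * (r : ℚ) + 20) * u + ((r : ℚ) + 5) ^ 2)
      = 4 * (∑ u ∈ Finset.Icc 1 (r + 4), (u : ℚ) ^ 2)
        - (4 * (r : ℚ) + 20) * (∑ u ∈ Finset.Icc 1 (r + 4), (u : ℚ))
        + ((r : ℚ) + 4) * ((r : ℚ) + 5) ^ 2 := by
    rw [Finset.sum_add_distrib, Finset.sum_sub_distrib, ← Finset.mul_sum, ← Finset.mul_sum,
      Finset.sum_const, Nat.card_Icc]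
    push_cast
    ring
  rw [e1, sum_id_q, sum_sq_q]
  have h4 : ((r : ℚ) + 4) ≠ 0 := by positivity
  field_simp
  push_cast
  ring

lemma key_bound (r : ℕ) :
    (((r : ℚ) + 4) ^ 2 - 1) / (12 * ((r : ℚ) + 4)) ≤ ((r : ℚ) + 4) / 12 := by
  have h4 : (0 : ℚ) < 12 * ((r : ℚ) + 4) := by positivity
  rw [div_le_div_iff₀ h4 (by norm_num)]
  nlinarith [Nat.cast_nonneg (α := ℚ) r]

theorem stmt_3 (r s : ℕ) (hr : 1 ≤ r) (hs : 1 ≤ s) :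
    ((7/8 : ℚ) - 3/2) ^ 2 +
      ((5/4 : ℚ) - 3/2) ^ 2 +
      ((11/8 : ℚ) - 3/2) ^ 2 +
      ((3/2 : ℚ) - 3/2) ^ 2 +
      ((13/8 : ℚ) - 3/2) ^ 2 +
      ((7/4 : ℚ) - 3/2) ^ 2 +
      ((17/8 : ℚ) - 3/2) ^ 2 +
      ∑ u ∈ Finset.Icc 1 (r + 4), ((2 * (u : ℚ) + 2 * (r : ℚ) + 7) / (2 * ((r : ℚ) + 4)) - 3/2) ^ 2 +
      ∑ v ∈ Finset.Icc 1 (s + 4), ((2 * (v : ℚ) + 2 * (s : ℚ) + 7) / (2 * ((s : ℚ) + 4)) - 3/2) ^ 2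
    ≤ ((15 + (r : ℚ) + (s : ℚ)) / 12) * (17/8 - 7/8) := by
  rw [key_sum r, key_sum s]
  have hr' : (1 : ℚ) ≤ (r : ℚ) := by exact_mod_cast hr
  have hs' : (1 : ℚ) ≤ (s : ℚ) := by exact_mod_cast hs
  have h1 := key_bound r
  have h2 := key_bound s
  nlinarith [h1, h2]
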